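/- |b − c √((1 + V(0))/2)| ≤ c³ M'' / (8√2), where b = √a. -/

import Mathlib

open Real MeasureTheory intervalIntegral


lemma aux_int1 : ∫ x in (-1:ℝ)..1, x ^ 2 * Real.sqrt (1 - x ^ 2) = Real.pi / 8 :=
  calc
    _ = ∫ x in sin (-(π / 2)).. sin (π / 2), x ^ 2 * √(1 - x ^ 2 : ℝ) := by
          rw [sin_neg, sin_pi_div_two]
    _ = ∫ x in (-(π / 2))..(π / 2), sin x ^ 2 * √(1 - sin x ^ 2 : ℝ) * cos x :=
          (integral_comp_mul_deriv (fun x _ => hasDerivAt_sin x) continuousOn_cos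
            (by fun_prop)).symm
    _ = ∫ x in (-(π / 2))..(π / 2), sin x ^ 2 * cos x ^ 2 := by
          refine integral_congr_ae (MeasureTheory.ae_of_all _ fun _ h => ?_)
          rw [Set.uIoc_of_le (neg_le_self (le_of_lt (half_pos Real.pi_pos))), Set.mem_Ioc] at h
          rw [← Real.cos_eq_sqrt_one_sub_sin_sq (le_of_lt h.1) h.2, sq (cos _)]
          ring
    _ = Real.pi / 8 := by
          rw [integral_sin_sq_mul_cos_sq]
          have h1 : 4 * (π / 2) = 2 * π := by ring
          have h2 : 4 * -(π / 2) = -(2 * π) := by ring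
          rw [h1, h2, Real.sin_neg, Real.sin_two_pi]
          ring


lemma aux_sqrt_scale {c : ℝ} (hc : 0 < c) (u : ℝ) :
    Real.sqrt (c ^ 2 - (c * u) ^ 2) = c * Real.sqrt (1 - u ^ 2) := by
  have : c ^ 2 - (c * u) ^ 2 = c ^ 2 * (1 - u ^ 2) := by ring
  rw [this, Real.sqrt_mul (sq_nonneg c), Real.sqrt_sq hc.le]

lemma aux_intc {c : ℝ} (hc : 0 < c) :
    ∫ x in (-c)..c, Real.sqrt (c ^ 2 - x ^ 2) = Real.pi * c ^ 2 / 2 := by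
  have h := intervalIntegral.integral_comp_mul_left
    (a := (-1:ℝ)) (b := 1) (fun x => Real.sqrt (c ^ 2 - x ^ 2)) hc.ne'
  simp only [mul_neg_one, mul_one] at h
  have h2 : ∫ u in (-1:ℝ)..1, Real.sqrt (c ^ 2 - (c * u) ^ 2)
      = c * (Real.pi / 2) := by
    calc (∫ u in (-1:ℝ)..1, Real.sqrt (c ^ 2 - (c * u) ^ 2))
        = ∫ u in (-1:ℝ)..1, c * Real.sqrt (1 - u ^ 2) := by
          refine integral_congr fun u _ => aux_sqrt_scale hc u
      _ = c * ∫ u in (-1:ℝ)..1, Real.sqrt (1 - u ^ 2) := by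
          rw [intervalIntegral.integral_const_mul]
      _ = c * (Real.pi / 2) := by rw [integral_sqrt_one_sub_sq]
  rw [h2] at h
  have := h.symm
  rw [smul_eq_mul] at this
  field_simp at this ⊢
  nlinarith [this]

lemma aux_intc2 {c : ℝ} (hc : 0 < c) :
    ∫ x in (-c)..c, x ^ 2 * Real.sqrt (c ^ 2 - x ^ 2) = Real.pi * c ^ 4 / 8 := by
  have h := intervalIntegral.integral_comp_mul_left
    (a := (-1:ℝ)) (b := 1) (fun x => x ^ 2 * Real.sqrt (c ^ 2 - x ^ 2)) hc.ne'
  simp only [mul_neg_one, mul_one] at h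
  have h2 : ∫ u in (-1:ℝ)..1, (c * u) ^ 2 * Real.sqrt (c ^ 2 - (c * u) ^ 2)
      = c ^ 3 * (Real.pi / 8) := by
    calc (∫ u in (-1:ℝ)..1, (c * u) ^ 2 * Real.sqrt (c ^ 2 - (c * u) ^ 2))
        = ∫ u in (-1:ℝ)..1, c ^ 3 * (u ^ 2 * Real.sqrt (1 - u ^ 2)) := by
          refine integral_congr fun u _ => ?_
          rw [aux_sqrt_scale hc u]; ring
      _ = c ^ 3 * ∫ u in (-1:ℝ)..1, u ^ 2 * Real.sqrt (1 - u ^ 2) := by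
          rw [intervalIntegral.integral_const_mul]
      _ = c ^ 3 * (Real.pi / 8) := by rw [aux_int1]
  rw [h2] at h
  have := h.symm
  rw [smul_eq_mul] at this
  field_simp at this ⊢
  nlinarith [this]

lemma aux_odd {c : ℝ} :
    ∫ x in (-c)..c, x * Real.sqrt (c ^ 2 - x ^ 2) = 0 := by
  have h := intervalIntegral.integral_comp_neg (a := (-c)) (b := c)
    (fun x => x * Real.sqrt (c ^ 2 - x ^ 2))
  simp only [neg_neg] at h
  have h2 : (∫ x in (-c)..c, (-x) * Real.sqrt (c ^ 2 - (-x) ^ 2))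
      = -∫ x in (-c)..c, x * Real.sqrt (c ^ 2 - x ^ 2) := by
    rw [← intervalIntegral.integral_neg]
    refine integral_congr fun x _ => ?_
    have : (-x) ^ 2 = x ^ 2 := by ring
    rw [this]; ring
  rw [h2] at h
  linarith [h]


lemma aux_taylor {c : ℝ} (hc : 0 < c) {V V' V'' : ℝ → ℝ}
    (hV1 : ∀ x ∈ Set.Icc (-c) c, HasDerivAt V (V' x) x)
    (hV2 : ∀ x ∈ Set.Icc (-c) c, HasDerivAt V' (V'' x) x)
    {M'' : ℝ} (hb : ∀ x ∈ Set.Icc (-c) c, |V'' x| ≤ M'')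
    {x : ℝ} (hx : x ∈ Set.Icc (-c) c) :
    |V x - V 0 - V' 0 * x| ≤ M'' / 2 * x ^ 2 := by
  have h0 : (0:ℝ) ∈ Set.Icc (-c) c := by constructor <;> linarith
  have hM0 : 0 ≤ M'' := (abs_nonneg _).trans (hb 0 h0)
  have hsub : Set.uIcc 0 x ⊆ Set.Icc (-c) c := Set.uIcc_subset_Icc h0 hx
  have hVcont : ContinuousOn V' (Set.Icc (-c) c) :=
    fun t ht => (hV2 t ht).continuousAt.continuousWithinAt
  -- Lipschitz-type bound for V'
  have hlip : ∀ s ∈ Set.Icc (-c) c, |V' s - V' 0| ≤ M'' * abs s := by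
    intro s hs
    have := (convex_Icc (-c) c).norm_image_sub_le_of_norm_hasDerivWithin_le
      (f := V') (f' := V'') (fun t ht => (hV2 t ht).hasDerivWithinAt)
      (fun t ht => by simpa [Real.norm_eq_abs] using hb t ht) h0 hs
    simpa [Real.norm_eq_abs] using this
  -- FTC
  have hftc : V x - V 0 = ∫ s in (0:ℝ)..x, V' s := by
    refine (intervalIntegral.integral_eq_sub_of_hasDerivAt
      (fun t ht => hV1 t (hsub ht)) ?_).symm
    exact (hVcont.mono hsub).intervalIntegrable
  have hconst : (∫ s in (0:ℝ)..x, V' 0) = V' 0 * x := by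
    simp [mul_comm]
  have hEint : V x - V 0 - V' 0 * x = ∫ s in (0:ℝ)..x, (V' s - V' 0) := by
    rw [intervalIntegral.integral_sub ((hVcont.mono hsub).intervalIntegrable)
      (intervalIntegrable_const), hconst, hftc]
  -- bound the integral
  have hbound : IntervalIntegrable (fun s => M'' * abs s) volume 0 x :=
    (continuous_const.mul continuous_abs).intervalIntegrable _ _
  have hle : |∫ s in (0:ℝ)..x, (V' s - V' 0)| ≤ |∫ s in (0:ℝ)..x, M'' * abs s| := by
    have := intervalIntegral.norm_integral_le_abs_of_norm_le (μ := volume)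
      (f := fun s => V' s - V' 0) (a := 0) (b := x)
      (g := fun s => M'' * abs s) ?_ hbound
    · simpa [Real.norm_eq_abs] using this
    · refine (ae_restrict_iff' measurableSet_uIoc).mpr (ae_of_all _ fun t ht => ?_)
      have ht' : t ∈ Set.Icc (-c) c := hsub (Set.uIoc_subset_uIcc ht)
      simpa [Real.norm_eq_abs] using hlip t ht'
  have hval : |∫ s in (0:ℝ)..x, M'' * abs s| = M'' / 2 * x ^ 2 := by
    rcases le_or_gt 0 x with hx0 | hx0
    · have : (∫ s in (0:ℝ)..x, M'' * abs s) = ∫ s in (0:ℝ)..x, M'' * s := by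
        refine integral_congr fun s hs => ?_
        rw [Set.uIcc_of_le hx0] at hs
        rw [abs_of_nonneg hs.1]
      rw [this, intervalIntegral.integral_const_mul, integral_id]
      rw [abs_of_nonneg (by nlinarith [hM0, sq_nonneg x])]
      ring
    · have : (∫ s in (0:ℝ)..x, M'' * abs s) = ∫ s in (0:ℝ)..x, M'' * (-s) := by
        refine integral_congr fun s hs => ?_
        rw [Set.uIcc_of_ge hx0.le] at hs
        rw [abs_of_nonpos hs.2]
      rw [this]
      have : (∫ s in (0:ℝ)..x, M'' * (-s)) = -(M'' * (x ^ 2 / 2)) := by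
        rw [show (fun s : ℝ => M'' * (-s)) = fun s : ℝ => (-M'') * s by ext s; ring]
        rw [intervalIntegral.integral_const_mul, integral_id]
        ring
      rw [this, abs_neg, abs_of_nonneg (by nlinarith [hM0, sq_nonneg x])]
      ring
  rw [hEint]
  calc |∫ s in (0:ℝ)..x, (V' s - V' 0)| ≤ |∫ s in (0:ℝ)..x, M'' * abs s| := hle
    _ = M'' / 2 * x ^ 2 := hval

theorem stmt_9
    (c : ℝ) (hc : 0 < c)
    (V V' V'' : ℝ → ℝ)
    (hV1 : ∀ x ∈ Set.Icc (-c) c, HasDerivAt V (V' x) x)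
    (hV2 : ∀ x ∈ Set.Icc (-c) c, HasDerivAt V' (V'' x) x)
    (hV2c : ContinuousOn V'' (Set.Icc (-c) c))
    (hVnn : ∀ x ∈ Set.Icc (-c) c, 0 ≤ V x)
    (r v : ℝ → ℝ)
    (hr : ∀ x, r x = Real.sqrt (c ^ 2 - x ^ 2))
    (hv : ∀ x, v x = r x * (1 + V x))
    (M M' M'' : ℝ)
    (hM : IsLUB (V '' Set.Icc (-c) c) M)
    (hM' : IsLUB ((fun x => |V' x|) '' Set.Icc (-c) c) M')
    (hM'' : IsLUB ((fun x => |V'' x|) '' Set.Icc (-c) c) M'')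
    (a : ℝ) (ha : a = (1 / Real.pi) * ∫ x in (-c)..c, v x)
    :
    |Real.sqrt a - c * Real.sqrt ((1 + V 0) / 2)| ≤ c ^ 3 * M'' / (8 * Real.sqrt 2) := by
  subst ha
  have hint0 : (∫ x in (-c)..c, v x)
      = ∫ x in (-c)..c, Real.sqrt (c ^ 2 - x ^ 2) * (1 + V x) :=
    intervalIntegral.integral_congr fun x _ => by rw [hv, hr]
  rw [hint0]
  have hmc : -c ≤ c := by linarith
  have hIcc : Set.uIcc (-c) c = Set.Icc (-c) c := Set.uIcc_of_le hmc
  have h0mem : (0:ℝ) ∈ Set.Icc (-c) c := by constructor <;> linarith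
  have hM''ub : ∀ x ∈ Set.Icc (-c) c, |V'' x| ≤ M'' := fun x hx => hM''.1 ⟨x, hx, rfl⟩
  have hM0 : 0 ≤ M'' := (abs_nonneg _).trans (hM''ub 0 h0mem)
  have hVc : ContinuousOn V (Set.Icc (-c) c) :=
    fun t ht => (hV1 t ht).continuousAt.continuousWithinAt
  have hrc : Continuous (fun x : ℝ => Real.sqrt (c ^ 2 - x ^ 2)) := by fun_prop
  set E : ℝ → ℝ := fun x => V x - V 0 - V' 0 * x with hE
  have hEc : ContinuousOn E (Set.Icc (-c) c) := by
    apply ContinuousOn.sub (ContinuousOn.sub hVc continuousOn_const)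
    fun_prop
  -- integrabilities
  have int_v : IntervalIntegrable (fun x => Real.sqrt (c ^ 2 - x ^ 2) * (1 + V x))
      volume (-c) c := by
    apply ContinuousOn.intervalIntegrable
    rw [hIcc]; exact hrc.continuousOn.mul (continuousOn_const.add hVc)
  have int_rE : IntervalIntegrable (fun x => Real.sqrt (c ^ 2 - x ^ 2) * E x)
      volume (-c) c := by
    apply ContinuousOn.intervalIntegrable
    rw [hIcc]; exact hrc.continuousOn.mul hEc
  have int_r : IntervalIntegrable (fun x => Real.sqrt (c ^ 2 - x ^ 2)) volume (-c) c :=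
    hrc.intervalIntegrable _ _
  have int_xr : IntervalIntegrable (fun x => x * Real.sqrt (c ^ 2 - x ^ 2)) volume (-c) c :=
    (continuous_id.mul hrc).intervalIntegrable _ _
  have int_x2r : IntervalIntegrable (fun x => x ^ 2 * Real.sqrt (c ^ 2 - x ^ 2)) volume (-c) c :=
    ((continuous_pow 2).mul hrc).intervalIntegrable _ _
  -- decomposition of the integral
  have hdecomp : (∫ x in (-c)..c, Real.sqrt (c ^ 2 - x ^ 2) * (1 + V x))
      = (∫ x in (-c)..c, Real.sqrt (c ^ 2 - x ^ 2) * E x)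
        + (1 + V 0) * (Real.pi * c ^ 2 / 2) := by
    have hptw : ∀ x, Real.sqrt (c ^ 2 - x ^ 2) * (1 + V x)
        = Real.sqrt (c ^ 2 - x ^ 2) * E x + (1 + V 0) * Real.sqrt (c ^ 2 - x ^ 2)
          + V' 0 * (x * Real.sqrt (c ^ 2 - x ^ 2)) := by
      intro x; simp only [hE]; ring
    calc (∫ x in (-c)..c, Real.sqrt (c ^ 2 - x ^ 2) * (1 + V x))
        = ∫ x in (-c)..c, (Real.sqrt (c ^ 2 - x ^ 2) * E x
            + (1 + V 0) * Real.sqrt (c ^ 2 - x ^ 2)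
            + V' 0 * (x * Real.sqrt (c ^ 2 - x ^ 2))) := by
          exact integral_congr fun x _ => hptw x
      _ = (∫ x in (-c)..c, Real.sqrt (c ^ 2 - x ^ 2) * E x)
            + (1 + V 0) * (∫ x in (-c)..c, Real.sqrt (c ^ 2 - x ^ 2))
            + V' 0 * (∫ x in (-c)..c, x * Real.sqrt (c ^ 2 - x ^ 2)) := by
          rw [intervalIntegral.integral_add (int_rE.add (int_r.const_mul _))
              (int_xr.const_mul _),
            intervalIntegral.integral_add int_rE (int_r.const_mul _),
            intervalIntegral.integral_const_mul, intervalIntegral.integral_const_mul]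
      _ = _ := by rw [aux_intc hc, aux_odd]; ring
  -- bound on the error integral
  have herr : |∫ x in (-c)..c, Real.sqrt (c ^ 2 - x ^ 2) * E x|
      ≤ M'' * Real.pi * c ^ 4 / 16 := by
    have hb : IntervalIntegrable
        (fun x => M'' / 2 * (x ^ 2 * Real.sqrt (c ^ 2 - x ^ 2))) volume (-c) c :=
      int_x2r.const_mul _
    have h := intervalIntegral.norm_integral_le_abs_of_norm_le (μ := volume)
      (f := fun x => Real.sqrt (c ^ 2 - x ^ 2) * E x) (a := -c) (b := c)
      (g := fun x => M'' / 2 * (x ^ 2 * Real.sqrt (c ^ 2 - x ^ 2))) ?_ hb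
    · have hval : (∫ x in (-c)..c, M'' / 2 * (x ^ 2 * Real.sqrt (c ^ 2 - x ^ 2)))
          = M'' * Real.pi * c ^ 4 / 16 := by
        rw [intervalIntegral.integral_const_mul, aux_intc2 hc]; ring
      rw [hval] at h
      rw [abs_of_nonneg (by positivity)] at h
      simpa [Real.norm_eq_abs] using h
    · refine (ae_restrict_iff' measurableSet_uIoc).mpr (ae_of_all _ fun t ht => ?_)
      have ht' : t ∈ Set.Icc (-c) c := by
        rw [← hIcc]; exact Set.uIoc_subset_uIcc ht
      have hT := aux_taylor hc hV1 hV2 hM''ub ht'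
      have hrnn : 0 ≤ Real.sqrt (c ^ 2 - t ^ 2) := Real.sqrt_nonneg _
      rw [Real.norm_eq_abs, abs_mul, abs_of_nonneg hrnn]
      calc Real.sqrt (c ^ 2 - t ^ 2) * |E t|
          ≤ Real.sqrt (c ^ 2 - t ^ 2) * (M'' / 2 * t ^ 2) :=
            mul_le_mul_of_nonneg_left hT hrnn
        _ = M'' / 2 * (t ^ 2 * Real.sqrt (c ^ 2 - t ^ 2)) := by ring
  -- setup for final estimate
  set A := ∫ x in (-c)..c, Real.sqrt (c ^ 2 - x ^ 2) * (1 + V x) with hA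
  set b0 : ℝ := c ^ 2 * (1 + V 0) / 2 with hb0
  have hpi : (0:ℝ) < Real.pi := Real.pi_pos
  have hV0 : 0 ≤ V 0 := hVnn 0 h0mem
  have hb0pos : 0 < b0 := by rw [hb0]; nlinarith
  have hanonneg : 0 ≤ (1 / Real.pi) * A := by
    have : 0 ≤ A := by
      apply intervalIntegral.integral_nonneg hmc
      intro u hu
      have := hVnn u hu
      positivity
    positivity
  have habs : |(1 / Real.pi) * A - b0| ≤ M'' * c ^ 4 / 16 := by
    have h1 : (1 / Real.pi) * A - b0
        = (1 / Real.pi) * ∫ x in (-c)..c, Real.sqrt (c ^ 2 - x ^ 2) * E x := by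
      rw [hdecomp, hb0]; field_simp; ring
    rw [h1, abs_mul, abs_of_nonneg (by positivity : (0:ℝ) ≤ 1 / Real.pi)]
    calc (1 / Real.pi) * |∫ x in (-c)..c, Real.sqrt (c ^ 2 - x ^ 2) * E x|
        ≤ (1 / Real.pi) * (M'' * Real.pi * c ^ 4 / 16) :=
          mul_le_mul_of_nonneg_left herr (by positivity)
      _ = M'' * c ^ 4 / 16 := by field_simp
  -- identify  c * sqrt((1+V0)/2) with sqrt b0
  have hsb : c * Real.sqrt ((1 + V 0) / 2) = Real.sqrt b0 := by
    rw [hb0, show c ^ 2 * (1 + V 0) / 2 = c ^ 2 * ((1 + V 0) / 2) by ring,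
      Real.sqrt_mul (sq_nonneg c), Real.sqrt_sq hc.le]
  rw [hsb]
  set aa := (1 / Real.pi) * A
  set X := |Real.sqrt aa - Real.sqrt b0| with hX
  have hX0 : 0 ≤ X := abs_nonneg _
  have hkey : X * Real.sqrt b0 ≤ |aa - b0| := by
    have hsum : X * (Real.sqrt aa + Real.sqrt b0) = |aa - b0| := by
      rw [hX, ← abs_of_nonneg (by positivity : (0:ℝ) ≤ Real.sqrt aa + Real.sqrt b0),
        ← abs_mul]
      congr 1
      have h1 : Real.sqrt aa ^ 2 = aa := Real.sq_sqrt hanonneg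
      have h2 : Real.sqrt b0 ^ 2 = b0 := Real.sq_sqrt hb0pos.le
      nlinarith [h1, h2]
    calc X * Real.sqrt b0 ≤ X * (Real.sqrt aa + Real.sqrt b0) :=
          mul_le_mul_of_nonneg_left (le_add_of_nonneg_left (Real.sqrt_nonneg _)) hX0
      _ = |aa - b0| := hsum
  have hsb0l : c / Real.sqrt 2 ≤ Real.sqrt b0 := by
    have h1 : Real.sqrt (c ^ 2 / 2) ≤ Real.sqrt b0 := by
      apply Real.sqrt_le_sqrt; rw [hb0]; nlinarith
    have h2 : Real.sqrt (c ^ 2 / 2) = c / Real.sqrt 2 := by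
      rw [show c ^ 2 / 2 = (c / Real.sqrt 2) ^ 2 by
          rw [div_pow, Real.sq_sqrt (by norm_num : (0:ℝ) ≤ 2)],
        Real.sqrt_sq (by positivity)]
    linarith
  have hs2 : (0:ℝ) < Real.sqrt 2 := by positivity
  have hq : 0 < c / Real.sqrt 2 := by positivity
  have step1 : X * (c / Real.sqrt 2) ≤ M'' * c ^ 4 / 16 :=
    le_trans (le_trans (mul_le_mul_of_nonneg_left hsb0l hX0) hkey) habs
  have step2 : X ≤ (M'' * c ^ 4 / 16) / (c / Real.sqrt 2) := (le_div_iff₀ hq).mpr step1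
  have heq : (M'' * c ^ 4 / 16) / (c / Real.sqrt 2) = c ^ 3 * M'' / (8 * Real.sqrt 2) := by
    have hs2sq : Real.sqrt 2 * Real.sqrt 2 = 2 :=
      Real.mul_self_sqrt (by norm_num)
    field_simp
    linear_combination (8 * M'') * hs2sq
  calc X ≤ _ := step2
    _ = _ := heq
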